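/- Let n = dd' be a squarefree positive integer all of whose prime factors are ≡ 1 (mod 4), with gcd(d,d') = 1, and suppose every prime factor p of d satisfies (2d'/p) = 1 (Legendre symbol) and every prime factor p' of d' satisfies (2d/p') = 1. For each prime p | n ≡ 1 mod 4 choose the primary Gaussian prime λ_p with positive imaginary part above p, and set θ₁ = ∏_{p|d} λ_p, θ₂ = ∏_{p|d'} λ_p, η = θ₁θ₂. Then (2d'/d)₄ · (2d/d')₄ = (2/η)₄ · (θ₂/θ₁), where (·/·)₄ on the left denotes the rational quartic residue symbol and (θ₂/θ₁) denotes the quadratic (Legendre) residue symbol over ℤ[i]. -/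

import Mathlib

open Zsqrtd
open scoped Classical

/-- The imaginary unit in the Gaussian integers. -/
def gi : GaussianInt := ⟨0, 1⟩

/-- A Gaussian integer is primary if it is congruent to 1 modulo 2+2i. -/
def IsPrimaryGI (θ : GaussianInt) : Prop := (2 + 2 * gi) ∣ (θ - 1)

/-- The quartic residue symbol (α/λ)₄ at a Gaussian prime λ coprime to 1+i:
the unique element of {1, -1, i, -i, 0} congruent to α^((Nλ-1)/4) modulo λ. -/
noncomputable def quarticSymbol (lam α : GaussianInt) : GaussianInt :=
  if h : ∃ u : GaussianInt, (u = 1 ∨ u = -1 ∨ u = gi ∨ u = -gi ∨ u = 0) ∧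
      lam ∣ (α ^ (((Zsqrtd.norm lam - 1) / 4).toNat) - u)
  then h.choose else 0

/-- The quadratic (Legendre) residue symbol (α/λ) at a Gaussian prime λ coprime to
1+i: the unique element of {1, -1, 0} congruent to α^((Nλ-1)/2) modulo λ. -/
noncomputable def quadSymbol (lam α : GaussianInt) : GaussianInt :=
  if h : ∃ u : GaussianInt, (u = 1 ∨ u = -1 ∨ u = 0) ∧
      lam ∣ (α ^ (((Zsqrtd.norm lam - 1) / 2).toNat) - u)
  then h.choose else 0

namespace Stmt13Aux

noncomputable section

abbrev ZI := GaussianInt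

/-- membership in {1, -1, i, -i, 0} -/
def Mem4 (u : ZI) : Prop := u = 1 ∨ u = -1 ∨ u = gi ∨ u = -gi ∨ u = 0

/-- membership in {1, -1, 0} -/
def Mem2 (u : ZI) : Prop := u = 1 ∨ u = -1 ∨ u = 0

instance : DecidablePred Mem4 := fun u => by unfold Mem4; infer_instance
instance : DecidablePred Mem2 := fun u => by unfold Mem2; infer_instance

lemma gi_mul_gi : gi * gi = -1 := by decide

lemma Mem4.mul {u v : ZI} (hu : Mem4 u) (hv : Mem4 v) : Mem4 (u * v) := by
  rcases hu with rfl|rfl|rfl|rfl|rfl <;> rcases hv with rfl|rfl|rfl|rfl|rfl <;> decide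

lemma Mem2.mem4 {u : ZI} (hu : Mem2 u) : Mem4 u := by
  rcases hu with rfl|rfl|rfl <;> decide

lemma Mem2.mul {u v : ZI} (hu : Mem2 u) (hv : Mem2 v) : Mem2 (u * v) := by
  rcases hu with rfl|rfl|rfl <;> rcases hv with rfl|rfl|rfl <;> decide

lemma Mem4.mul_star {u : ZI} (hu : Mem4 u) (h0 : u ≠ 0) : u * star u = 1 := by
  rcases hu with rfl|rfl|rfl|rfl|rfl <;> first | decide | exact absurd rfl h0

section Phi

variable {p : ℕ} [hpf : Fact p.Prime] {π : ZI}

/-- Existence of the quotient homomorphism to `ZMod p` killing exactly multiples of π. -/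
lemma exists_phi (hπ : Prime π) (hmul : π * star π = (p : ZI)) :
    ∃ φ : ZI →+* ZMod p, ∀ x, φ x = 0 ↔ π ∣ x := by
  have hp := hpf.out
  have hnorm : (π.re * π.re + π.im * π.im : ℤ) = (p : ℤ) := by
    have h := Zsqrtd.norm_eq_mul_conj π
    rw [hmul] at h
    have h2 : ((π.norm : ℤ) : ZI) = ((p : ℤ) : ZI) := by
      rw [h]; push_cast; ring
    have h3 : π.norm = (p : ℤ) := by
      exact_mod_cast h2
    rw [Zsqrtd.norm_def] at h3
    linarith [h3]
  -- b := π.im is invertible mod p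
  have hb : ((π.im : ℤ) : ZMod p) ≠ 0 := by
    intro h0
    rw [ZMod.intCast_zmod_eq_zero_iff_dvd] at h0
    have hpi : Prime (p : ℤ) := Nat.prime_iff_prime_int.mp hp
    have hbb : (p : ℤ) ∣ π.im * π.im := h0.mul_left π.im
    have hsum : (p : ℤ) ∣ π.re * π.re + π.im * π.im := hnorm ▸ dvd_refl _
    have ha2 : (p : ℤ) ∣ π.re * π.re := by
      have h5 := dvd_sub hsum hbb
      simpa using h5
    have ha : (p : ℤ) ∣ π.re := hpi.dvd_of_dvd_pow (n := 2) (by rwa [sq])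
    have hpp : (p : ℤ) * (p : ℤ) ∣ π.re * π.re + π.im * π.im :=
      dvd_add (mul_dvd_mul ha ha) (mul_dvd_mul h0 h0)
    rw [hnorm] at hpp
    have hple := Int.le_of_dvd (by exact_mod_cast hp.pos) hpp
    have h2p : (2:ℤ) ≤ (p:ℤ) := by exact_mod_cast hp.two_le
    nlinarith
  set a : ZMod p := ((π.re : ℤ) : ZMod p)
  set b : ZMod p := ((π.im : ℤ) : ZMod p)
  have hab : a * a + b * b = 0 := by
    have := congrArg (fun z : ℤ => (z : ZMod p)) hnorm
    simpa [a, b] using this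
  have haa : a * a = -(b*b) := by linear_combination hab
  have hbinv : b * b⁻¹ = 1 := mul_inv_cancel₀ hb
  have hu : (-a * b⁻¹) * (-a * b⁻¹) = ((-1 : ℤ) : ZMod p) := by
    push_cast
    calc (-a * b⁻¹) * (-a * b⁻¹) = (a * a) * (b⁻¹ * b⁻¹) := by ring
      _ = (-(b * b)) * (b⁻¹ * b⁻¹) := by rw [haa]
      _ = -((b * b⁻¹) * (b * b⁻¹)) := by ring
      _ = -1 := by rw [hbinv]; ring
  set φ : ZI →+* ZMod p := Zsqrtd.lift ⟨-a * b⁻¹, hu⟩ with hφdef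
  have hφπ : φ π = 0 := by
    show ((π.re : ℤ) : ZMod p) + ((π.im : ℤ) : ZMod p) * (-a * b⁻¹) = 0
    calc ((π.re : ℤ) : ZMod p) + ((π.im : ℤ) : ZMod p) * (-a * b⁻¹)
        = a - (b * b⁻¹) * a := by ring
      _ = 0 := by rw [hbinv]; ring
  refine ⟨φ, fun x => ⟨fun hx => ?_, fun ⟨y, hy⟩ => by rw [hy, map_mul, hφπ, zero_mul]⟩⟩
  -- kernel is the maximal ideal (π)
  have hmax : (Ideal.span {π}).IsMaximal :=
    PrincipalIdealRing.isMaximal_of_irreducible hπ.irreducible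
  have hle : Ideal.span {π} ≤ RingHom.ker φ := by
    rw [Ideal.span_le]
    intro z hz
    simp only [Set.mem_singleton_iff] at hz
    subst hz
    simpa [RingHom.mem_ker] using hφπ
  have hne : RingHom.ker φ ≠ ⊤ := by
    intro h
    have : φ 1 = 0 := by
      have : (1 : ZI) ∈ RingHom.ker φ := by rw [h]; trivial
      simpa [RingHom.mem_ker] using this
    simp at this
  have heq : Ideal.span {π} = RingHom.ker φ := hmax.eq_of_le hne hle
  have : x ∈ RingHom.ker φ := by simpa [RingHom.mem_ker] using hx
  rw [← heq, Ideal.mem_span_singleton] at this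
  exact this

end Phi

section Symbols

variable {p : ℕ} [hpf : Fact p.Prime] {π : ZI} {φ : ZI →+* ZMod p}

lemma p_ge_five (hp4 : p % 4 = 1) : 5 ≤ p := by
  have := hpf.out.two_le; omega

lemma two_ne_zero'' (hp4 : p % 4 = 1) : (2 : ZMod p) ≠ 0 := by
  have h5 := p_ge_five (p := p) hp4
  intro h
  have hd : (p:ℕ) ∣ 2 := (CharP.cast_eq_zero_iff (ZMod p) p 2).mp h
  have := Nat.le_of_dvd (by norm_num) hd
  omega

lemma norm_sq_eq (hmul : π * star π = (p : ZI)) : Zsqrtd.norm π = (p : ℤ) := by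
  have h := Zsqrtd.norm_eq_mul_conj π
  rw [hmul] at h
  have h2 : ((π.norm : ℤ) : ZI) = ((p : ℤ) : ZI) := by rw [h]; push_cast; ring
  exact_mod_cast h2

lemma quartic_exp_eq (hp4 : p % 4 = 1) (hmul : π * star π = (p : ZI)) :
    ((Zsqrtd.norm π - 1) / 4).toNat = (p - 1) / 4 := by
  rw [norm_sq_eq hmul]
  have := hpf.out.two_le
  omega

lemma quad_exp_eq (hp4 : p % 4 = 1) (hmul : π * star π = (p : ZI)) :
    ((Zsqrtd.norm π - 1) / 2).toNat = (p - 1) / 2 := by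
  rw [norm_sq_eq hmul]
  have := hpf.out.two_le
  omega

lemma phi_gi_sq : φ gi * φ gi = -1 := by
  rw [← map_mul, gi_mul_gi, map_neg, map_one]

lemma mem4_phi_inj (hp4 : p % 4 = 1) {u v : ZI} (hu : Mem4 u) (hv : Mem4 v)
    (h : φ u = φ v) : u = v := by
  have h2 : (2 : ZMod p) ≠ 0 := two_ne_zero'' hp4
  have hi2 : φ gi * φ gi = -1 := phi_gi_sq
  have hI0 : φ gi ≠ 0 := by
    intro hI; rw [hI, mul_zero] at hi2
    exact one_ne_zero (α := ZMod p) (by linear_combination hi2)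
  have hIne1 : φ gi ≠ 1 := by
    intro hI; rw [hI, mul_one] at hi2
    exact h2 (by linear_combination hi2)
  have hIneg1 : φ gi ≠ -1 := by
    intro hI; rw [hI] at hi2
    exact h2 (by linear_combination hi2)
  have hInegI : φ gi ≠ -φ gi := by
    intro hI
    have : (2 : ZMod p) * φ gi = 0 := by linear_combination hI
    rcases mul_eq_zero.mp this with h'|h'
    · exact h2 h'
    · exact hI0 h'
  have h1neg1 : (1 : ZMod p) ≠ -1 := by
    intro hI; exact h2 (by linear_combination hI)
  have h10 : (1 : ZMod p) ≠ 0 := one_ne_zero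
  have hneg10 : (-1 : ZMod p) ≠ 0 := by
    intro hI; exact h10 (by linear_combination -hI)
  rcases hu with rfl|rfl|rfl|rfl|rfl <;> rcases hv with rfl|rfl|rfl|rfl|rfl <;>
    simp only [map_one, map_neg, map_zero] at h <;>
    first
      | rfl
      | (exfalso
         first
          | exact h2 (by linear_combination h)
          | exact h2 (by linear_combination -h)
          | exact hI0 (by linear_combination h)
          | exact hI0 (by linear_combination -h)
          | exact hIne1 (by linear_combination h)
          | exact hIne1 (by linear_combination -h)
          | exact hIneg1 (by linear_combination h)
          | exact hIneg1 (by linear_combination -h)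
          | exact hInegI (by linear_combination h)
          | exact hInegI (by linear_combination -h)
          | exact h1neg1 (by linear_combination h)
          | exact h1neg1 (by linear_combination -h)
          | exact h10 (by linear_combination h)
          | exact h10 (by linear_combination -h)
          | exact hneg10 (by linear_combination h)
          | exact hneg10 (by linear_combination -h))

variable (hp4 : p % 4 = 1) (hmul : π * star π = (p : ZI)) (hφ : ∀ x, φ x = 0 ↔ π ∣ x)

set_option linter.unusedSectionVars false

include hp4 hmul hφ

lemma exists_mem4_pow (x : ZI) : ∃ u, Mem4 u ∧ φ u = φ x ^ ((p - 1) / 4) := by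
  have h5 := p_ge_five (p := p) hp4
  by_cases h0 : φ x = 0
  · refine ⟨0, Or.inr (Or.inr (Or.inr (Or.inr rfl))), ?_⟩
    rw [map_zero, h0, zero_pow]
    omega
  · set y := φ x ^ ((p - 1) / 4) with hy
    have hy4 : y ^ 4 = 1 := by
      rw [hy, ← pow_mul]
      have he : (p - 1) / 4 * 4 = p - 1 := by omega
      rw [he]
      exact ZMod.pow_card_sub_one_eq_one h0
    have hfac : (y ^ 2 - 1) * (y ^ 2 + 1) = 0 := by linear_combination hy4
    have hi2 : φ gi * φ gi = -1 := phi_gi_sq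
    rcases mul_eq_zero.mp hfac with h|h
    · have hfac2 : (y - 1) * (y + 1) = 0 := by linear_combination h
      rcases mul_eq_zero.mp hfac2 with h'|h'
      · exact ⟨1, Or.inl rfl, by rw [map_one]; linear_combination -h'⟩
      · exact ⟨-1, Or.inr (Or.inl rfl), by rw [map_neg, map_one]; linear_combination -h'⟩
    · have hfac2 : (y - φ gi) * (y + φ gi) = 0 := by linear_combination h - hi2
      rcases mul_eq_zero.mp hfac2 with h'|h'
      · exact ⟨gi, Or.inr (Or.inr (Or.inl rfl)), by linear_combination -h'⟩
      · exact ⟨-gi, Or.inr (Or.inr (Or.inr (Or.inl rfl))),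
          by rw [map_neg]; linear_combination -h'⟩

lemma exists_mem2_pow (x : ZI) : ∃ u, Mem2 u ∧ φ u = φ x ^ ((p - 1) / 2) := by
  have h5 := p_ge_five (p := p) hp4
  by_cases h0 : φ x = 0
  · refine ⟨0, Or.inr (Or.inr rfl), ?_⟩
    rw [map_zero, h0, zero_pow]
    omega
  · set y := φ x ^ ((p - 1) / 2) with hy
    have hy2 : y ^ 2 = 1 := by
      rw [hy, ← pow_mul]
      have he : (p - 1) / 2 * 2 = p - 1 := by omega
      rw [he]
      exact ZMod.pow_card_sub_one_eq_one h0
    have hfac : (y - 1) * (y + 1) = 0 := by linear_combination hy2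
    rcases mul_eq_zero.mp hfac with h'|h'
    · exact ⟨1, Or.inl rfl, by rw [map_one]; linear_combination -h'⟩
    · exact ⟨-1, Or.inr (Or.inl rfl), by rw [map_neg, map_one]; linear_combination -h'⟩

lemma quarticSymbol_spec (x : ZI) :
    Mem4 (quarticSymbol π x) ∧ φ (quarticSymbol π x) = φ x ^ ((p - 1) / 4) := by
  obtain ⟨u, hu, hphiu⟩ := exists_mem4_pow hp4 hmul hφ x
  have hex : ∃ u : ZI, (u = 1 ∨ u = -1 ∨ u = gi ∨ u = -gi ∨ u = 0) ∧
      π ∣ (x ^ (((Zsqrtd.norm π - 1) / 4).toNat) - u) := by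
    refine ⟨u, hu, (hφ _).mp ?_⟩
    rw [map_sub, map_pow, quartic_exp_eq hp4 hmul, hphiu, sub_self]
  rw [quarticSymbol, dif_pos hex]
  obtain ⟨hmem, hdvd⟩ := hex.choose_spec
  set w := hex.choose with hw
  clear_value w
  refine ⟨hmem, ?_⟩
  have h0 := (hφ _).mpr hdvd
  rw [map_sub, map_pow, quartic_exp_eq hp4 hmul, sub_eq_zero] at h0
  exact h0.symm

lemma quadSymbol_spec (x : ZI) :
    Mem2 (quadSymbol π x) ∧ φ (quadSymbol π x) = φ x ^ ((p - 1) / 2) := by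
  obtain ⟨u, hu, hphiu⟩ := exists_mem2_pow hp4 hmul hφ x
  have hex : ∃ u : ZI, (u = 1 ∨ u = -1 ∨ u = 0) ∧
      π ∣ (x ^ (((Zsqrtd.norm π - 1) / 2).toNat) - u) := by
    refine ⟨u, hu, (hφ _).mp ?_⟩
    rw [map_sub, map_pow, quad_exp_eq hp4 hmul, hphiu, sub_self]
  rw [quadSymbol, dif_pos hex]
  obtain ⟨hmem, hdvd⟩ := hex.choose_spec
  set w := hex.choose with hw
  clear_value w
  refine ⟨hmem, ?_⟩
  have h0 := (hφ _).mpr hdvd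
  rw [map_sub, map_pow, quad_exp_eq hp4 hmul, sub_eq_zero] at h0
  exact h0.symm

lemma quarticSymbol_eq_iff {x u : ZI} :
    quarticSymbol π x = u ↔ Mem4 u ∧ φ u = φ x ^ ((p - 1) / 4) := by
  obtain ⟨hm, he⟩ := quarticSymbol_spec hp4 hmul hφ x
  constructor
  · rintro rfl; exact ⟨hm, he⟩
  · rintro ⟨hm', he'⟩
    exact mem4_phi_inj hp4 hm hm' (by rw [he, he'])

lemma quadSymbol_eq_iff {x u : ZI} :
    quadSymbol π x = u ↔ Mem2 u ∧ φ u = φ x ^ ((p - 1) / 2) := by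
  obtain ⟨hm, he⟩ := quadSymbol_spec hp4 hmul hφ x
  constructor
  · rintro rfl; exact ⟨hm, he⟩
  · rintro ⟨hm', he'⟩
    exact mem4_phi_inj hp4 hm.mem4 hm'.mem4 (by rw [he, he'])

lemma quarticSymbol_mul (x y : ZI) :
    quarticSymbol π (x * y) = quarticSymbol π x * quarticSymbol π y := by
  obtain ⟨hmx, hex⟩ := quarticSymbol_spec hp4 hmul hφ x
  obtain ⟨hmy, hey⟩ := quarticSymbol_spec hp4 hmul hφ y
  rw [quarticSymbol_eq_iff hp4 hmul hφ]
  exact ⟨hmx.mul hmy, by rw [map_mul, map_mul, hex, hey, mul_pow]⟩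

lemma quadSymbol_mul (x y : ZI) :
    quadSymbol π (x * y) = quadSymbol π x * quadSymbol π y := by
  obtain ⟨hmx, hex⟩ := quadSymbol_spec hp4 hmul hφ x
  obtain ⟨hmy, hey⟩ := quadSymbol_spec hp4 hmul hφ y
  rw [quadSymbol_eq_iff hp4 hmul hφ]
  exact ⟨hmx.mul hmy, by rw [map_mul, map_mul, hex, hey, mul_pow]⟩

lemma quarticSymbol_congr {x y : ZI} (h : φ x = φ y) :
    quarticSymbol π x = quarticSymbol π y := by
  obtain ⟨hmy, hey⟩ := quarticSymbol_spec hp4 hmul hφ y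
  rw [quarticSymbol_eq_iff hp4 hmul hφ]
  exact ⟨hmy, by rw [hey, h]⟩

lemma quadSymbol_congr {x y : ZI} (h : φ x = φ y) :
    quadSymbol π x = quadSymbol π y := by
  obtain ⟨hmy, hey⟩ := quadSymbol_spec hp4 hmul hφ y
  rw [quadSymbol_eq_iff hp4 hmul hφ]
  exact ⟨hmy, by rw [hey, h]⟩

lemma quarticSymbol_one : quarticSymbol π 1 = 1 := by
  rw [quarticSymbol_eq_iff hp4 hmul hφ]
  exact ⟨Or.inl rfl, by rw [map_one, one_pow]⟩

lemma quadSymbol_one : quadSymbol π 1 = 1 := by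
  rw [quadSymbol_eq_iff hp4 hmul hφ]
  exact ⟨Or.inl rfl, by rw [map_one, one_pow]⟩

lemma quadSymbol_neg_one : quadSymbol π (-1) = 1 := by
  rw [quadSymbol_eq_iff hp4 hmul hφ]
  refine ⟨Or.inl rfl, ?_⟩
  rw [map_one, map_neg, map_one]
  have he : Even ((p - 1) / 2) := by
    refine ⟨(p - 1) / 4, ?_⟩
    have := hpf.out.two_le
    omega
  rw [he.neg_one_pow]

lemma quarticSymbol_prod {ι : Type*} (s : Finset ι) (f : ι → ZI) :
    quarticSymbol π (∏ i ∈ s, f i) = ∏ i ∈ s, quarticSymbol π (f i) := by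
  classical
  induction s using Finset.induction_on with
  | empty => simpa using quarticSymbol_one hp4 hmul hφ
  | insert _ _ hnotmem ih =>
      rw [Finset.prod_insert hnotmem, Finset.prod_insert hnotmem,
        quarticSymbol_mul hp4 hmul hφ, ih]

lemma quadSymbol_prod {ι : Type*} (s : Finset ι) (f : ι → ZI) :
    quadSymbol π (∏ i ∈ s, f i) = ∏ i ∈ s, quadSymbol π (f i) := by
  classical
  induction s using Finset.induction_on with
  | empty => simpa using quadSymbol_one hp4 hmul hφ
  | insert _ _ hnotmem ih =>
      rw [Finset.prod_insert hnotmem, Finset.prod_insert hnotmem,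
        quadSymbol_mul hp4 hmul hφ, ih]

end Symbols

lemma Mem4.pow_four {u : ZI} (hu : Mem4 u) (h0 : u ≠ 0) : u ^ 4 = 1 := by
  rcases hu with rfl|rfl|rfl|rfl|rfl <;> first | decide | exact absurd rfl h0

lemma two_not_dvd_one_add_gi : ¬ (2 : ZI) ∣ (1 + gi) := by
  rintro ⟨y, hy⟩
  have h := congrArg Zsqrtd.norm hy
  have h1 : Zsqrtd.norm (1 + gi) = 2 := by decide
  have h2 : Zsqrtd.norm (2 : ZI) = 4 := by decide
  rw [Zsqrtd.norm_mul, h1, h2] at h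
  have h3 := Zsqrtd.norm_nonneg (by norm_num) y
  omega

lemma two_not_dvd_one_sub_gi : ¬ (2 : ZI) ∣ (1 - gi) := by
  rintro ⟨y, hy⟩
  have h := congrArg Zsqrtd.norm hy
  have h1 : Zsqrtd.norm (1 - gi) = 2 := by decide
  have h2 : Zsqrtd.norm (2 : ZI) = 4 := by decide
  rw [Zsqrtd.norm_mul, h1, h2] at h
  have h3 := Zsqrtd.norm_nonneg (by norm_num) y
  omega

lemma toComplex_inv_of_mem4 {v w : ZI} (hv : Mem4 v) (hw : Mem4 w) (hvw : w * v = 1) :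
    GaussianInt.toComplex w = (starRingEnd ℂ) (GaussianInt.toComplex v) := by
  rcases hv with rfl|rfl|rfl|rfl|rfl <;> rcases hw with rfl|rfl|rfl|rfl|rfl <;>
    first
      | (exact absurd hvw (by decide))
      | simp [GaussianInt.toComplex_def', gi, Complex.conj_I]

lemma gi_primitive : IsPrimitiveRoot (gi : ZI) 4 := by
  constructor
  · decide
  · intro l hl
    have hl4 : gi ^ (l % 4) = 1 := by
      have hd : l = 4 * (l / 4) + l % 4 := by omega
      rw [hd, pow_add, pow_mul] at hl
      have h4 : gi ^ 4 = 1 := by decide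
      rwa [h4, one_pow, one_mul] at hl
    have hc : l % 4 = 0 ∨ l % 4 = 1 ∨ l % 4 = 2 ∨ l % 4 = 3 := by omega
    rcases hc with h|h|h|h <;> rw [h] at hl4
    · omega
    · exact absurd hl4 (by decide)
    · exact absurd hl4 (by decide)
    · exact absurd hl4 (by decide)

section Chi

variable {q : ℕ} [hqf : Fact q.Prime] {κ : ZI} {φκ : ZI →+* ZMod q}
variable (hq4 : q % 4 = 1) (hκmul : κ * star κ = (q : ZI)) (hφκ : ∀ x, φκ x = 0 ↔ κ ∣ x)

set_option linter.unusedSectionVars false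

include hq4 hκmul hφκ

lemma quarticSymbol_zero : quarticSymbol κ 0 = 0 := by
  rw [quarticSymbol_eq_iff hq4 hκmul hφκ]
  refine ⟨Or.inr (Or.inr (Or.inr (Or.inr rfl))), ?_⟩
  rw [map_zero, zero_pow]
  have := p_ge_five (p := q) hq4
  omega

lemma exists_chi : ∃ χ₀ : MulChar (ZMod q) ZI,
    ∀ x : ZMod q, χ₀ x = quarticSymbol κ ((x.val : ℕ) : ZI) := by
  have hval : ∀ x : ZMod q, ((x.val : ℕ) : ZMod q) = x := fun x => ZMod.natCast_rightInverse x
  refine ⟨{ toFun := fun x => quarticSymbol κ ((x.val : ℕ) : ZI),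
            map_one' := ?_, map_mul' := ?_, map_nonunit' := ?_ }, fun _ => rfl⟩
  · show quarticSymbol κ _ = 1
    rw [← quarticSymbol_one hq4 hκmul hφκ]
    apply quarticSymbol_congr hq4 hκmul hφκ
    rw [map_natCast, map_one, hval]
  · intro x y
    show quarticSymbol κ _ = quarticSymbol κ _ * quarticSymbol κ _
    rw [← quarticSymbol_mul hq4 hκmul hφκ]
    apply quarticSymbol_congr hq4 hκmul hφκ
    rw [map_natCast, ← Nat.cast_mul, map_natCast, hval, Nat.cast_mul, hval, hval]
  · intro x hx
    show quarticSymbol κ _ = 0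
    have hx0 : x = 0 := by rwa [isUnit_iff_ne_zero, not_not] at hx
    subst hx0
    rw [ZMod.val_zero, Nat.cast_zero]
    exact quarticSymbol_zero hq4 hκmul hφκ

variable {χ₀ : MulChar (ZMod q) ZI}
  (hχ : ∀ x : ZMod q, χ₀ x = quarticSymbol κ ((x.val : ℕ) : ZI))

include hχ

lemma chi_val (x : ZMod q) : Mem4 (χ₀ x) ∧ φκ (χ₀ x) = x ^ ((q - 1) / 4) := by
  have hval : ((x.val : ℕ) : ZMod q) = x := ZMod.natCast_rightInverse x
  rw [hχ x]
  obtain ⟨hm, he⟩ := quarticSymbol_spec hq4 hκmul hφκ ((x.val : ℕ) : ZI)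
  exact ⟨hm, by rw [he, map_natCast, hval]⟩

lemma chi_natCast (m : ℕ) : χ₀ ((m : ℕ) : ZMod q) = quarticSymbol κ ((m : ℕ) : ZI) := by
  rw [hχ]
  apply quarticSymbol_congr hq4 hκmul hφκ
  rw [map_natCast, map_natCast, ZMod.natCast_val, ZMod.cast_natCast']

lemma chi_ne_zero {x : ZMod q} (hx : x ≠ 0) : χ₀ x ≠ 0 := by
  obtain ⟨hm, he⟩ := chi_val hq4 hκmul hφκ hχ x
  intro h0
  rw [h0, map_zero] at he
  exact pow_ne_zero _ hx he.symm

lemma chi_pow_four : χ₀ ^ 4 = 1 := by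
  apply MulChar.ext
  intro a
  rw [MulChar.pow_apply' _ (by norm_num), MulChar.one_apply_coe]
  exact ((chi_val hq4 hκmul hφκ hχ _).1).pow_four
    (chi_ne_zero hq4 hκmul hφκ hχ (Units.ne_zero a))

lemma chi_sq_ne_one : χ₀ * χ₀ ≠ 1 := by
  have h5 := p_ge_five (p := q) hq4
  obtain ⟨g, hg⟩ := IsCyclic.exists_generator (α := (ZMod q)ˣ)
  have horder : orderOf g = q - 1 := by
    rw [orderOf_eq_card_of_forall_mem_zpowers hg, Nat.card_eq_fintype_card, ZMod.card_units]
  have hgpow : ((g : ZMod q)) ^ ((q - 1) / 2) ≠ 1 := by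
    intro h
    have hunit : (g : (ZMod q)ˣ) ^ ((q - 1) / 2) = 1 := by
      apply Units.ext
      rw [Units.val_pow_eq_pow_val, h, Units.val_one]
    have hdvd := orderOf_dvd_of_pow_eq_one hunit
    rw [horder] at hdvd
    have := Nat.le_of_dvd (by omega) hdvd
    omega
  intro hcontra
  apply hgpow
  have h1 : (χ₀ * χ₀) (g : ZMod q) = 1 := by
    rw [hcontra, MulChar.one_apply_coe]
  rw [MulChar.mul_apply] at h1
  have h2 := congrArg φκ h1
  obtain ⟨_, hphi⟩ := chi_val hq4 hκmul hφκ hχ (g : ZMod q)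
  rw [map_mul, hphi, map_one, ← pow_add] at h2
  have he : (q - 1) / 4 + (q - 1) / 4 = (q - 1) / 2 := by omega
  rwa [he] at h2

lemma chi_ne_one : χ₀ ≠ 1 := by
  intro h
  exact chi_sq_ne_one hq4 hκmul hφκ hχ (by rw [h, one_mul])

lemma jacobi_dvd : κ ∣ jacobiSum χ₀ χ₀ := by
  have h5 := p_ge_five (p := q) hq4
  rw [← hφκ, jacobiSum, map_sum]
  set m := (q - 1) / 4 with hm
  have hterm : ∀ x : ZMod q, φκ (χ₀ x * χ₀ (1 - x)) = x ^ m * (1 - x) ^ m := fun x => by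
    rw [map_mul, (chi_val hq4 hκmul hφκ hχ x).2, (chi_val hq4 hκmul hφκ hχ (1 - x)).2]
  rw [Finset.sum_congr rfl (fun x _ => hterm x)]
  calc ∑ x : ZMod q, x ^ m * (1 - x) ^ m
      = ∑ x : ZMod q, ∑ j ∈ Finset.range (m + 1),
          (-1) ^ j * (m.choose j : ZMod q) * x ^ (m + j) := by
        refine Finset.sum_congr rfl fun x _ => ?_
        rw [sub_eq_add_neg, add_comm, add_pow, Finset.mul_sum]
        refine Finset.sum_congr rfl fun j hj => ?_
        rw [one_pow, neg_pow]
        ring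
    _ = ∑ j ∈ Finset.range (m + 1),
          (-1) ^ j * (m.choose j : ZMod q) * ∑ x : ZMod q, x ^ (m + j) := by
        rw [Finset.sum_comm]
        refine Finset.sum_congr rfl fun j _ => ?_
        rw [Finset.mul_sum]
    _ = 0 := by
        refine Finset.sum_eq_zero fun j hj => ?_
        have hj' := Finset.mem_range.mp hj
        have hz : ∑ x : ZMod q, x ^ (m + j) = 0 := by
          refine FiniteField.sum_pow_lt_card_sub_one (ZMod q) (m + j) ?_
          rw [ZMod.card]
          omega
        rw [hz, mul_zero]

lemma jacobi_norm : jacobiSum χ₀ χ₀ * star (jacobiSum χ₀ χ₀) = ((q : ℕ) : ZI) := by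
  set χC : MulChar (ZMod q) ℂ := χ₀.ringHomComp GaussianInt.toComplex with hχCdef
  have hinj : Function.Injective GaussianInt.toComplex := GaussianInt.toComplex_injective
  have hchar : ringChar ℂ ≠ ringChar (ZMod q) := by
    rw [ZMod.ringChar_zmod_n, ringChar.eq_zero]
    exact fun h => hqf.out.ne_zero h.symm
  have hχC1 : χC ≠ 1 :=
    (MulChar.ringHomComp_ne_one_iff hinj).mpr (chi_ne_one hq4 hκmul hφκ hχ)
  have hχχ : χC * χC ≠ 1 := by
    rw [← MulChar.ringHomComp_mul]
    exact (MulChar.ringHomComp_ne_one_iff hinj).mpr (chi_sq_ne_one hq4 hκmul hφκ hχ)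
  have hJJ := jacobiSum_mul_jacobiSum_inv hchar hχC1 hχC1 hχχ
  have hconj : χC⁻¹ = χ₀.ringHomComp ((starRingEnd ℂ).comp GaussianInt.toComplex) := by
    apply MulChar.ext
    intro a
    rw [MulChar.inv_apply' χC (a : ZMod q), MulChar.ringHomComp_apply,
      MulChar.ringHomComp_apply, RingHom.comp_apply]
    refine toComplex_inv_of_mem4 (chi_val hq4 hκmul hφκ hχ (a : ZMod q)).1
      (chi_val hq4 hκmul hφκ hχ (((a : ZMod q))⁻¹)).1 ?_
    rw [← map_mul, inv_mul_cancel₀ (Units.ne_zero a), MulChar.map_one]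
  rw [hconj, jacobiSum_ringHomComp, jacobiSum_ringHomComp] at hJJ
  rw [RingHom.comp_apply, ZMod.card] at hJJ
  apply hinj
  rw [map_mul, GaussianInt.toComplex_star, map_natCast]
  exact hJJ

lemma jacobi_parity : (2 : ZI) ∣ jacobiSum χ₀ χ₀ + 1 := by
  have hc4 : χ₀ ^ 4 = 1 := chi_pow_four hq4 hκmul hφκ hχ
  obtain ⟨z, hz, hJ⟩ := exists_jacobiSum_eq_neg_one_add (by norm_num : (2:ℕ) < 4)
    hc4 hc4 (by rw [ZMod.card]; omega) (μ := gi) gi_primitive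
  have hgi2 : (gi - 1) ^ 2 = -2 * gi := by decide
  exact ⟨-(z * gi), by linear_combination hJ + z * hgi2⟩

lemma jacobi_eq (hκ1 : (2 : ZI) ∣ κ - 1) (hκpr : Prime κ) :
    jacobiSum χ₀ χ₀ = κ ∨ jacobiSum χ₀ χ₀ = -κ := by
  obtain ⟨w, hw⟩ := jacobi_dvd hq4 hκmul hφκ hχ
  have hnorm := jacobi_norm hq4 hκmul hφκ hχ
  have hκ0 : κ * star κ ≠ 0 := by
    rw [hκmul]
    exact_mod_cast (Nat.cast_ne_zero (R := ZI)).mpr hqf.out.ne_zero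
  have hwsw : w * star w = 1 := by
    apply mul_left_cancel₀ hκ0
    calc (κ * star κ) * (w * star w) = (κ * w) * star (κ * w) := by
          rw [star_mul]; ring
      _ = jacobiSum χ₀ χ₀ * star (jacobiSum χ₀ χ₀) := by rw [← hw]
      _ = ((q : ℕ) : ZI) := hnorm
      _ = (κ * star κ) * 1 := by rw [mul_one, hκmul]
  have hnw : Zsqrtd.norm w = 1 := by
    have h := Zsqrtd.norm_eq_mul_conj w
    rw [hwsw] at h
    exact_mod_cast h
  have hwcases : w = 1 ∨ w = -1 ∨ w = gi ∨ w = -gi := by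
    rw [Zsqrtd.norm_def] at hnw
    have h1 : w.re * w.re + w.im * w.im = 1 := by linarith
    have hre := mul_self_nonneg w.re
    have him := mul_self_nonneg w.im
    have hcases : (w.re * w.re = 0 ∧ w.im * w.im = 1) ∨
        (w.re * w.re = 1 ∧ w.im * w.im = 0) := by omega
    rcases hcases with ⟨ha, hb⟩ | ⟨ha, hb⟩
    · rcases mul_self_eq_one_iff.mp hb with h|h
      · right; right; left
        have := mul_self_eq_zero.mp ha
        apply Zsqrtd.ext <;> simp [gi, this, h]
      · right; right; right
        have := mul_self_eq_zero.mp ha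
        apply Zsqrtd.ext <;> simp [gi, this, h]
    · rcases mul_self_eq_one_iff.mp ha with h|h
      · left
        have := mul_self_eq_zero.mp hb
        apply Zsqrtd.ext <;> simp [this, h]
      · right; left
        have := mul_self_eq_zero.mp hb
        apply Zsqrtd.ext <;> simp [this, h]
  obtain ⟨s, hs⟩ := hκ1
  obtain ⟨t, ht⟩ := jacobi_parity hq4 hκmul hφκ hχ
  rcases hwcases with rfl|rfl|rfl|rfl
  · left; rw [hw, mul_one]
  · right; rw [hw]; ring
  · exfalso
    apply two_not_dvd_one_add_gi
    exact ⟨t - s * gi, by linear_combination ht - hw - gi * hs⟩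
  · exfalso
    apply two_not_dvd_one_sub_gi
    exact ⟨t + s * gi, by linear_combination ht - hw + gi * hs⟩

lemma chi_exists_gi : ∃ x : (ZMod q)ˣ,
    χ₀ ((x : ZMod q)) = gi ∨ χ₀ ((x : ZMod q)) = -gi := by
  have h5 := p_ge_five (p := q) hq4
  obtain ⟨g, hg⟩ := IsCyclic.exists_generator (α := (ZMod q)ˣ)
  have horder : orderOf g = q - 1 := by
    rw [orderOf_eq_card_of_forall_mem_zpowers hg, Nat.card_eq_fintype_card, ZMod.card_units]
  have hgpow : ((g : ZMod q)) ^ ((q - 1) / 2) ≠ 1 := by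
    intro h
    have hunit : (g : (ZMod q)ˣ) ^ ((q - 1) / 2) = 1 := by
      apply Units.ext
      rw [Units.val_pow_eq_pow_val, h, Units.val_one]
    have hdvd := orderOf_dvd_of_pow_eq_one hunit
    rw [horder] at hdvd
    have := Nat.le_of_dvd (by omega) hdvd
    omega
  obtain ⟨hm, hphi⟩ := chi_val hq4 hκmul hφκ hχ ((g : ZMod q))
  have he : (q - 1) / 2 = (q - 1) / 4 + (q - 1) / 4 := by omega
  have hsq : φκ (χ₀ ((g : ZMod q))) * φκ (χ₀ ((g : ZMod q))) ≠ 1 := by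
    intro hcc
    apply hgpow
    rw [he, pow_add, ← hphi, hcc]
  rcases hm with h|h|h|h|h
  · exfalso; apply hsq; rw [h, map_one, one_mul]
  · exfalso; apply hsq; rw [h, map_neg, map_one]; ring
  · exact ⟨g, Or.inl h⟩
  · exact ⟨g, Or.inr h⟩
  · exact absurd h (chi_ne_zero hq4 hκmul hφκ hχ (Units.ne_zero g))

end Chi

section Master

lemma master {q : ℕ} [hqf : Fact q.Prime] {FF : Type*} [Field FF] (p : ℕ) [hpf : Fact p.Prime]
    [hch : CharP FF p] (hp4 : p % 4 = 1) (hne : p ≠ q)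
    (χ : MulChar (ZMod q) FF) (hχ4 : χ ^ 4 = 1) (hχ1 : χ ≠ 1) (hχ2 : χ * χ ≠ 1)
    (hquad : MulChar.IsQuadratic (χ * χ)) (hχχm1 : (χ * χ) (-1) = 1)
    (ψ : AddChar (ZMod q) FF) (hψ : ψ.IsPrimitive) :
    χ ((p : ℕ) : ZMod q) * ((jacobiSum χ χ) ^ 2 * ((q : ℕ) : FF)) ^ ((p - 1) / 4) = 1 := by
  have hp := hpf.out
  have hq := hqf.out
  have hcard0 : ((Fintype.card (ZMod q) : FF)) ≠ 0 := by
    rw [ZMod.card]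
    intro h
    have hd := (CharP.cast_eq_zero_iff FF p q).mp h
    exact hne ((Nat.prime_dvd_prime_iff_eq hp hq).mp hd)
  have hg0 : gaussSum χ ψ ≠ 0 := gaussSum_ne_zero_of_nontrivial hcard0 hχ1 hψ
  have hsq : gaussSum χ ψ ^ 2 = jacobiSum χ χ * gaussSum (χ * χ) ψ := by
    have h := jacobiSum_mul_nontrivial hχ2 ψ
    rw [pow_two, ← h]
    ring
  have hqq := gaussSum_sq hχ2 hquad hψ
  have hg4 : gaussSum χ ψ ^ 4 = jacobiSum χ χ ^ 2 * ((q : ℕ) : FF) := by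
    calc gaussSum χ ψ ^ 4 = (gaussSum χ ψ ^ 2) ^ 2 := by ring
      _ = jacobiSum χ χ ^ 2 * (gaussSum (χ * χ) ψ ^ 2) := by rw [hsq]; ring
      _ = jacobiSum χ χ ^ 2 * ((q : ℕ) : FF) := by rw [hqq, hχχm1, one_mul, ZMod.card]
  have hfrob : gaussSum χ ψ ^ p = gaussSum (χ ^ p) (ψ ^ p) := gaussSum_frob p χ ψ
  obtain ⟨e, he⟩ : ∃ e, p = 4 * e + 1 := ⟨p / 4, by omega⟩
  have hχp : χ ^ p = χ := by
    rw [he, pow_add, pow_mul, hχ4, one_pow, pow_one, one_mul]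
  have hψp : ψ ^ p = ψ.mulShift ((p : ℕ) : ZMod q) := AddChar.pow_mulShift ψ p
  have hcoprime : Nat.Coprime p q := (Nat.coprime_primes hp hq).mpr hne
  have hpunit : IsUnit ((p : ℕ) : ZMod q) := ⟨ZMod.unitOfCoprime p hcoprime, rfl⟩
  have hshift := gaussSum_mulShift χ ψ hpunit.unit
  have hkey : χ ((p : ℕ) : ZMod q) * gaussSum χ ψ ^ p = gaussSum χ ψ := by
    rw [hfrob, hχp, hψp]
    rw [← hshift, IsUnit.unit_spec]
  have hgp : gaussSum χ ψ ^ p =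
      (jacobiSum χ χ ^ 2 * ((q : ℕ) : FF)) ^ e * gaussSum χ ψ := by
    conv_lhs => rw [he]
    rw [pow_add, pow_mul, hg4, pow_one]
  have hmain : χ ((p : ℕ) : ZMod q) * (jacobiSum χ χ ^ 2 * ((q : ℕ) : FF)) ^ e = 1 := by
    apply mul_right_cancel₀ hg0
    rw [one_mul]
    calc (χ ((p : ℕ) : ZMod q) * (jacobiSum χ χ ^ 2 * ((q : ℕ) : FF)) ^ e) * gaussSum χ ψ
        = χ ((p : ℕ) : ZMod q) * gaussSum χ ψ ^ p := by rw [hgp]; ring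
      _ = gaussSum χ ψ := hkey
  have hee : e = (p - 1) / 4 := by omega
  rwa [hee] at hmain

end Master

section LemmaP

lemma lemmaP {p q : ℕ} (hp : p.Prime) (hq : q.Prime) (hp4 : p % 4 = 1) (hq4 : q % 4 = 1)
    (hne : p ≠ q) {π κ : ZI} (hπpr : Prime π) (hκpr : Prime κ)
    (hπmul : π * star π = (p : ZI)) (hκmul : κ * star κ = (q : ZI))
    (hκ1 : (2 : ZI) ∣ κ - 1) :
    quarticSymbol π ((q : ℕ) : ZI) * quarticSymbol κ ((p : ℕ) : ZI) = quadSymbol π κ := by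
  haveI hpf : Fact p.Prime := ⟨hp⟩
  haveI hqf : Fact q.Prime := ⟨hq⟩
  have h5p := p_ge_five (p := p) hp4
  have h5q := p_ge_five (p := q) hq4
  obtain ⟨φπ, hφπ⟩ := exists_phi hπpr hπmul
  obtain ⟨φκ, hφκ⟩ := exists_phi hκpr hκmul
  obtain ⟨χ₀, hχ⟩ := exists_chi hq4 hκmul hφκ
  have hchar_ne : ringChar (ZMod p) ≠ ringChar (ZMod q) := by
    rw [ZMod.ringChar_zmod_n, ZMod.ringChar_zmod_n]
    exact hne
  obtain ⟨n, ψc, ψprim⟩ := AddChar.FiniteField.primitiveChar (ZMod q) (ZMod p) hchar_ne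
  set FF := CyclotomicField n (ZMod p) with hFFdef
  have hchar : ringChar (ZMod p) = ringChar FF := Algebra.ringChar_eq (ZMod p) FF
  have hcharFF : ringChar FF = p := by rw [← hchar, ZMod.ringChar_zmod_n]
  haveI : CharP FF (ringChar FF) := ringChar.charP FF
  haveI hCharP : CharP FF p := CharP.congr (ringChar FF) hcharFF
  set ρ : ZI →+* FF := (algebraMap (ZMod p) FF).comp φπ with hρdef
  set χ : MulChar (ZMod q) FF := χ₀.ringHomComp ρ with hχdef
  have hiinj : Function.Injective (algebraMap (ZMod p) FF) := (algebraMap (ZMod p) FF).injective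
  have hχapp : ∀ x : ZMod q, χ x = ρ (χ₀ x) := fun _ => rfl
  have hχ4 : χ ^ 4 = 1 := by
    rw [hχdef, MulChar.ringHomComp_pow, chi_pow_four hq4 hκmul hφκ hχ,
      MulChar.ringHomComp_one]
  have hm1 : (-1 : FF) ≠ 1 := by
    intro h
    have h2 : ((2 : ℕ) : FF) = 0 := by push_cast; linear_combination -h
    have hd := (CharP.cast_eq_zero_iff FF p 2).mp h2
    have := Nat.le_of_dvd two_pos hd
    omega
  obtain ⟨g, hgval⟩ := chi_exists_gi hq4 hκmul hφκ hχ
  have hχg : χ (g : ZMod q) * χ (g : ZMod q) = -1 := by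
    rw [hχapp, ← map_mul]
    have hv : χ₀ ((g : ZMod q)) * χ₀ ((g : ZMod q)) = -1 := by
      rcases hgval with h|h <;> rw [h] <;> decide
    rw [hv, map_neg, map_one]
  have hχ1 : χ ≠ 1 := by
    intro h
    have hg1 : χ ((g : ZMod q)) = 1 := by rw [h]; exact MulChar.one_apply_coe g
    rw [hg1, mul_one] at hχg
    exact hm1 hχg.symm
  have hχ2 : χ * χ ≠ 1 := by
    intro h
    have hg1 : (χ * χ) ((g : ZMod q)) = 1 := by rw [h]; exact MulChar.one_apply_coe g
    rw [MulChar.mul_apply, hχg] at hg1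
    exact hm1 hg1
  have hquad : MulChar.IsQuadratic (χ * χ) := by
    intro x
    rw [MulChar.mul_apply, hχapp, ← map_mul]
    have hv : χ₀ x * χ₀ x = 0 ∨ χ₀ x * χ₀ x = 1 ∨ χ₀ x * χ₀ x = -1 := by
      rcases (chi_val hq4 hκmul hφκ hχ x).1 with h|h|h|h|h <;> rw [h] <;> decide
    rcases hv with h|h|h <;> rw [h]
    · left; exact map_zero ρ
    · right; left; exact map_one ρ
    · right; right; rw [map_neg, map_one]
  have hχχm1 : (χ * χ) (-1) = 1 := by
    rw [MulChar.mul_apply, ← map_mul, neg_one_mul, neg_neg, MulChar.map_one]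
  set J : ZI := jacobiSum χ₀ χ₀ with hJdef
  have hJff : jacobiSum χ χ = ρ J := by rw [hχdef, jacobiSum_ringHomComp]
  have hmaster := master p hp4 (fun h => hne h) χ hχ4 hχ1 hχ2 hquad hχχm1 ψc ψprim
  rw [hJff] at hmaster
  have hmain2 : ρ (χ₀ ((p : ℕ) : ZMod q) * (J ^ 2 * ((q : ℕ) : ZI)) ^ ((p - 1) / 4)) = ρ 1 := by
    rw [map_one, map_mul, map_pow, map_mul, map_pow, map_natCast ρ]
    rw [← hχapp]
    exact hmaster
  have hmain3 : φπ (χ₀ ((p : ℕ) : ZMod q) * (J ^ 2 * ((q : ℕ) : ZI)) ^ ((p - 1) / 4)) = φπ 1 := by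
    apply hiinj
    exact hmain2
  have hχ₀B : χ₀ ((p : ℕ) : ZMod q) = quarticSymbol κ ((p : ℕ) : ZI) :=
    chi_natCast hq4 hκmul hφκ hχ p
  obtain ⟨hAm, hAe⟩ := quarticSymbol_spec hp4 hπmul hφπ ((q : ℕ) : ZI)
  obtain ⟨hCm, hCe⟩ := quadSymbol_spec hp4 hπmul hφπ J
  obtain ⟨hBm, hBe⟩ := quarticSymbol_spec hq4 hκmul hφκ ((p : ℕ) : ZI)
  set A := quarticSymbol π ((q : ℕ) : ZI)
  set B := quarticSymbol κ ((p : ℕ) : ZI)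
  set C := quadSymbol π J
  have hφmain : φπ (B * (A * C)) = φπ 1 := by
    rw [← hmain3, hχ₀B]
    rw [map_mul, map_mul, map_mul, map_pow, map_mul, map_pow]
    congr 1
    rw [hAe, hCe]
    rw [mul_pow, ← pow_mul]
    have h2e : 2 * ((p - 1) / 4) = (p - 1) / 2 := by omega
    rw [h2e]
    ring
  have hBAC : B * (A * C) = 1 :=
    mem4_phi_inj hp4 (hBm.mul (hAm.mul hCm.mem4)) (Or.inl rfl) hφmain
  have hC0 : C ≠ 0 := by
    intro h0
    rw [h0, mul_zero, mul_zero] at hBAC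
    exact zero_ne_one hBAC
  have hCC : C * C = 1 := by
    rcases hCm with h|h|h
    · rw [h]; decide
    · rw [h]; decide
    · exact absurd h hC0
  have hABC : A * B = C := by
    calc A * B = B * (A * (C * C)) := by rw [hCC]; ring
      _ = (B * (A * C)) * C := by ring
      _ = C := by rw [hBAC, one_mul]
  have hJκ : C = quadSymbol π κ := by
    rcases jacobi_eq hq4 hκmul hφκ hχ hκ1 hκpr with hJe|hJe
    · rw [← hJdef] at hJe
      rw [show C = quadSymbol π J from rfl, hJe]
    · rw [← hJdef] at hJe
      rw [show C = quadSymbol π J from rfl, hJe]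
      have hmκ : (-κ : ZI) = -1 * κ := by ring
      rw [hmκ, quadSymbol_mul hp4 hπmul hφπ, quadSymbol_neg_one hp4 hπmul hφπ, one_mul]
  rw [hABC, hJκ]

end LemmaP

end

end Stmt13Aux

theorem stmt13 (n d d' : ℕ) (lam : ℕ → GaussianInt)
    (hn : 0 < n) (hsf : Squarefree n) (hdd : n = d * d') (hcop : Nat.Coprime d d')
    (hmod : ∀ p ∈ n.primeFactors, p % 4 = 1)
    (hleg₁ : ∀ p ∈ d.primeFactors,
      IsSquare ((2 * d' : ℕ) : ZMod p) ∧ ((2 * d' : ℕ) : ZMod p) ≠ 0)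
    (hleg₂ : ∀ p ∈ d'.primeFactors,
      IsSquare ((2 * d : ℕ) : ZMod p) ∧ ((2 * d : ℕ) : ZMod p) ≠ 0)
    (hlam : ∀ p ∈ n.primeFactors, Prime (lam p) ∧ IsPrimaryGI (lam p) ∧
      0 < (lam p).im ∧ lam p * star (lam p) = (p : GaussianInt)) :
    (∏ p ∈ d.primeFactors, quarticSymbol (lam p) ((2 * d' : ℕ) : GaussianInt)) *
      (∏ p ∈ d'.primeFactors, quarticSymbol (lam p) ((2 * d : ℕ) : GaussianInt)) =
    (∏ p ∈ n.primeFactors, quarticSymbol (lam p) 2) *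
      (∏ p ∈ d.primeFactors, quadSymbol (lam p) (∏ q ∈ d'.primeFactors, lam q)) := by
  classical
  open Stmt13Aux in
  have hd0 : d ≠ 0 := fun h => by rw [h, zero_mul] at hdd; omega
  have hd'0 : d' ≠ 0 := fun h => by rw [h, mul_zero] at hdd; omega
  have hsfd : Squarefree d := hsf.squarefree_of_dvd ⟨d', hdd⟩
  have hsfd' : Squarefree d' := hsf.squarefree_of_dvd ⟨d, by rw [hdd, mul_comm]⟩
  have hunion : n.primeFactors = d.primeFactors ∪ d'.primeFactors := by
    rw [hdd, Nat.primeFactors_mul hd0 hd'0]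
  have hdisj : Disjoint d.primeFactors d'.primeFactors :=
    Nat.Coprime.disjoint_primeFactors hcop
  have hmemd : ∀ p ∈ d.primeFactors, p ∈ n.primeFactors := fun p hp => by
    rw [hunion]; exact Finset.mem_union_left _ hp
  have hmemd' : ∀ p ∈ d'.primeFactors, p ∈ n.primeFactors := fun p hp => by
    rw [hunion]; exact Finset.mem_union_right _ hp
  have hdata : ∀ p ∈ n.primeFactors, Nat.Prime p ∧ p % 4 = 1 ∧ Prime (lam p) ∧
      lam p * star (lam p) = (p : GaussianInt) ∧ (2 : GaussianInt) ∣ lam p - 1 := by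
    intro p hp
    obtain ⟨h1, h2, h3, h4⟩ := hlam p hp
    refine ⟨Nat.prime_of_mem_primeFactors hp, hmod p hp, h1, h4, ?_⟩
    obtain ⟨t, ht⟩ := h2
    exact ⟨(1 + gi) * t, by rw [ht]; ring⟩
  have hLd : ∀ p ∈ d.primeFactors,
      quarticSymbol (lam p) ((2 * d' : ℕ) : GaussianInt) =
        quarticSymbol (lam p) 2 *
          ∏ q ∈ d'.primeFactors, quarticSymbol (lam p) ((q : ℕ) : GaussianInt) := by
    intro p hp
    obtain ⟨hpp, hp4, hπpr, hπmul, _⟩ := hdata p (hmemd p hp)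
    haveI : Fact p.Prime := ⟨hpp⟩
    obtain ⟨φ, hφ⟩ := Stmt13Aux.exists_phi hπpr hπmul
    have hd'eq : (∏ q ∈ d'.primeFactors, q) = d' := Nat.prod_primeFactors_of_squarefree hsfd'
    have hcast : ((2 * d' : ℕ) : GaussianInt) =
        2 * ∏ q ∈ d'.primeFactors, ((q : ℕ) : GaussianInt) := by
      conv_lhs => rw [← hd'eq]
      push_cast
      ring
    rw [hcast, Stmt13Aux.quarticSymbol_mul hp4 hπmul hφ,
      Stmt13Aux.quarticSymbol_prod hp4 hπmul hφ]
  have hLd' : ∀ q ∈ d'.primeFactors,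
      quarticSymbol (lam q) ((2 * d : ℕ) : GaussianInt) =
        quarticSymbol (lam q) 2 *
          ∏ p ∈ d.primeFactors, quarticSymbol (lam q) ((p : ℕ) : GaussianInt) := by
    intro q hq
    obtain ⟨hqp, hq4, hκpr, hκmul, _⟩ := hdata q (hmemd' q hq)
    haveI : Fact q.Prime := ⟨hqp⟩
    obtain ⟨φ, hφ⟩ := Stmt13Aux.exists_phi hκpr hκmul
    have hdeq : (∏ p ∈ d.primeFactors, p) = d := Nat.prod_primeFactors_of_squarefree hsfd
    have hcast : ((2 * d : ℕ) : GaussianInt) =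
        2 * ∏ p ∈ d.primeFactors, ((p : ℕ) : GaussianInt) := by
      conv_lhs => rw [← hdeq]
      push_cast
      ring
    rw [hcast, Stmt13Aux.quarticSymbol_mul hq4 hκmul hφ,
      Stmt13Aux.quarticSymbol_prod hq4 hκmul hφ]
  have hRd : ∀ p ∈ d.primeFactors,
      quadSymbol (lam p) (∏ q ∈ d'.primeFactors, lam q) =
        ∏ q ∈ d'.primeFactors, quadSymbol (lam p) (lam q) := by
    intro p hp
    obtain ⟨hpp, hp4, hπpr, hπmul, _⟩ := hdata p (hmemd p hp)
    haveI : Fact p.Prime := ⟨hpp⟩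
    obtain ⟨φ, hφ⟩ := Stmt13Aux.exists_phi hπpr hπmul
    rw [Stmt13Aux.quadSymbol_prod hp4 hπmul hφ]
  have hpair : ∀ p ∈ d.primeFactors, ∀ q ∈ d'.primeFactors,
      quarticSymbol (lam p) ((q : ℕ) : GaussianInt) *
        quarticSymbol (lam q) ((p : ℕ) : GaussianInt) = quadSymbol (lam p) (lam q) := by
    intro p hp q hq
    obtain ⟨hpp, hp4, hπpr, hπmul, _⟩ := hdata p (hmemd p hp)
    obtain ⟨hqp, hq4, hκpr, hκmul, hκ1⟩ := hdata q (hmemd' q hq)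
    have hne : p ≠ q := by
      intro h
      subst h
      have h1 := Nat.dvd_of_mem_primeFactors hp
      have h2 := Nat.dvd_of_mem_primeFactors hq
      have h3 : p ∣ Nat.gcd d d' := Nat.dvd_gcd h1 h2
      rw [hcop] at h3
      exact hpp.ne_one (Nat.dvd_one.mp h3)
    exact Stmt13Aux.lemmaP hpp hqp hp4 hq4 hne hπpr hκpr hπmul hκmul hκ1
  rw [Finset.prod_congr rfl hLd, Finset.prod_congr rfl hLd',
    Finset.prod_congr rfl hRd, Finset.prod_mul_distrib, Finset.prod_mul_distrib,
    hunion, Finset.prod_union hdisj]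
  have hswap : (∏ q ∈ d'.primeFactors, ∏ p ∈ d.primeFactors,
        quarticSymbol (lam q) ((p : ℕ) : GaussianInt)) =
      ∏ p ∈ d.primeFactors, ∏ q ∈ d'.primeFactors,
        quarticSymbol (lam q) ((p : ℕ) : GaussianInt) := Finset.prod_comm
  rw [hswap]
  have hcomb : (∏ p ∈ d.primeFactors, ∏ q ∈ d'.primeFactors,
        quarticSymbol (lam p) ((q : ℕ) : GaussianInt)) *
      (∏ p ∈ d.primeFactors, ∏ q ∈ d'.primeFactors,
        quarticSymbol (lam q) ((p : ℕ) : GaussianInt)) =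
      ∏ p ∈ d.primeFactors, ∏ q ∈ d'.primeFactors, quadSymbol (lam p) (lam q) := by
    rw [← Finset.prod_mul_distrib]
    refine Finset.prod_congr rfl fun p hp => ?_
    rw [← Finset.prod_mul_distrib]
    exact Finset.prod_congr rfl fun q hq => hpair p hp q hq
  calc ((∏ p ∈ d.primeFactors, quarticSymbol (lam p) 2) *
          ∏ p ∈ d.primeFactors, ∏ q ∈ d'.primeFactors,
            quarticSymbol (lam p) ((q : ℕ) : GaussianInt)) *
        ((∏ q ∈ d'.primeFactors, quarticSymbol (lam q) 2) *
          ∏ p ∈ d.primeFactors, ∏ q ∈ d'.primeFactors,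
            quarticSymbol (lam q) ((p : ℕ) : GaussianInt))
      = ((∏ p ∈ d.primeFactors, quarticSymbol (lam p) 2) *
          ∏ q ∈ d'.primeFactors, quarticSymbol (lam q) 2) *
        ((∏ p ∈ d.primeFactors, ∏ q ∈ d'.primeFactors,
            quarticSymbol (lam p) ((q : ℕ) : GaussianInt)) *
          ∏ p ∈ d.primeFactors, ∏ q ∈ d'.primeFactors,
            quarticSymbol (lam q) ((p : ℕ) : GaussianInt)) := by ring
    _ = ((∏ p ∈ d.primeFactors, quarticSymbol (lam p) 2) *
          ∏ q ∈ d'.primeFactors, quarticSymbol (lam q) 2) *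
        ∏ p ∈ d.primeFactors, ∏ q ∈ d'.primeFactors, quadSymbol (lam p) (lam q) := by
          rw [hcomb]
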